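/- Define c₁ = √2 and c_{n+1} = √(2 + c_n). Then π = lim_{n→∞} 2^{n+1} · √(2 − c_n) (Viète-type nested radical formula from the square). -/

import Mathlib

open Filter Topology

private lemma sin_div_tendsto :
    Tendsto (fun x : ℝ => Real.sin x / x) (nhdsWithin 0 {0}ᶜ) (nhds 1) := by
  have h := (Real.hasDerivAt_sin 0)
  rw [Real.cos_zero] at h
  have := hasDerivAt_iff_tendsto_slope.mp h
  refine this.congr' ?_
  filter_upwards [self_mem_nhdsWithin] with x hx
  simp [slope_def_field, div_eq_div_iff, Real.sin_zero]

private lemma cos_form (c : ℕ → ℝ) (hc1 : c 1 = Real.sqrt 2)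
    (hcrec : ∀ n, 1 ≤ n → c (n + 1) = Real.sqrt (2 + c n)) :
    ∀ n, 1 ≤ n → c n = 2 * Real.cos (Real.pi / 2 ^ (n + 1)) := by
  intro n hn
  induction n with
  | zero => omega
  | succ m ih =>
    rcases Nat.eq_or_lt_of_le hn with h | h
    · -- m + 1 = 1
      have hm : m = 0 := by omega
      subst hm
      rw [hc1]
      have : Real.pi / 2 ^ (0 + 1 + 1) = Real.pi / 4 := by norm_num
      rw [this, Real.cos_pi_div_four]
      rw [Real.sqrt_eq_iff_eq_sq] <;> nlinarith [Real.sq_sqrt (by norm_num : (2:ℝ) ≥ 0), Real.sqrt_nonneg 2]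
    · have hm : 1 ≤ m := by omega
      rw [hcrec m hm, ih hm]
      set θ := Real.pi / 2 ^ (m + 1 + 1) with hθ
      have hθpos : 0 < θ := by positivity
      have hθlt : θ ≤ Real.pi / 2 := by
        rw [hθ]
        apply div_le_div_of_nonneg_left Real.pi_pos.le (by norm_num)
        have : (2:ℝ) ≤ 2 ^ (m + 1 + 1) := by
          calc (2:ℝ) = 2 ^ 1 := by norm_num
          _ ≤ 2 ^ (m + 1 + 1) := pow_le_pow_right₀ one_le_two (by omega)
        linarith
      have h2θ : Real.pi / 2 ^ (m + 1) = 2 * θ := by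
        rw [hθ]; field_simp; ring
      rw [h2θ, Real.cos_two_mul]
      have hcos : 0 ≤ Real.cos θ := Real.cos_nonneg_of_mem_Icc ⟨by linarith, hθlt⟩
      have : 2 + 2 * (2 * Real.cos θ ^ 2 - 1) = (2 * Real.cos θ) ^ 2 := by ring
      rw [this, Real.sqrt_sq (by linarith)]

theorem pi_viete (c : ℕ → ℝ) (hc1 : c 1 = Real.sqrt 2)
    (hcrec : ∀ n, 1 ≤ n → c (n + 1) = Real.sqrt (2 + c n)) :
    Filter.Tendsto (fun n : ℕ => (1 : ℝ) * ((2 : ℝ) ^ (n + 1) * Real.sqrt (2 - c n)))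
      Filter.atTop (nhds Real.pi) := by
  have key : ∀ n, 1 ≤ n →
      (1 : ℝ) * ((2 : ℝ) ^ (n + 1) * Real.sqrt (2 - c n))
        = Real.pi * (Real.sin (Real.pi / 2 ^ (n + 2)) / (Real.pi / 2 ^ (n + 2))) := by
    intro n hn
    rw [cos_form c hc1 hcrec n hn]
    set θ := Real.pi / 2 ^ (n + 2) with hθ
    have hθpos : 0 < θ := by positivity
    have hθlt : θ ≤ Real.pi / 2 := by
      rw [hθ]
      apply div_le_div_of_nonneg_left Real.pi_pos.le (by norm_num)
      have : (2:ℝ) ≤ 2 ^ (n + 2) := by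
        calc (2:ℝ) = 2 ^ 1 := by norm_num
        _ ≤ 2 ^ (n + 2) := pow_le_pow_right₀ one_le_two (by omega)
      linarith
    have h2θ : Real.pi / 2 ^ (n + 1) = 2 * θ := by
      rw [hθ]; field_simp; ring
    rw [h2θ, Real.cos_two_mul]
    have hsin : 0 ≤ Real.sin θ := Real.sin_nonneg_of_nonneg_of_le_pi hθpos.le (by linarith [Real.pi_pos])
    have hps : Real.sin θ ^ 2 + Real.cos θ ^ 2 = 1 := Real.sin_sq_add_cos_sq θ
    have : 2 - 2 * (2 * Real.cos θ ^ 2 - 1) = (2 * Real.sin θ) ^ 2 := by nlinarith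
    rw [this, Real.sqrt_sq (by linarith), hθ]
    have hπ := Real.pi_ne_zero
    field_simp
    ring
  have hev : ∀ᶠ n in atTop, Real.pi * (Real.sin (Real.pi / 2 ^ (n + 2)) / (Real.pi / 2 ^ (n + 2)))
      = (1 : ℝ) * ((2 : ℝ) ^ (n + 1) * Real.sqrt (2 - c n)) := by
    filter_upwards [eventually_ge_atTop 1] with n hn
    exact (key n hn).symm
  apply Tendsto.congr' hev
  have hx : Tendsto (fun n : ℕ => Real.pi / 2 ^ (n + 2)) atTop (nhdsWithin 0 {0}ᶜ) := by
    apply tendsto_nhdsWithin_of_tendsto_nhds_of_eventually_within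
    · have : Tendsto (fun n : ℕ => ((2:ℝ) ^ (n + 2))⁻¹) atTop (nhds 0) := by
        apply tendsto_inv_atTop_zero.comp
        apply tendsto_atTop_mono (fun n => ?_) tendsto_natCast_atTop_atTop
        calc (n:ℝ) ≤ 2 ^ n := by exact_mod_cast (Nat.lt_two_pow_self : n < 2 ^ n) |>.le
        _ ≤ 2 ^ (n + 2) := pow_le_pow_right₀ one_le_two (by omega)
      have := this.const_mul Real.pi
      simpa [div_eq_mul_inv] using this
    · filter_upwards with n
      have : (0:ℝ) < Real.pi / 2 ^ (n + 2) := by positivity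
      simp [this.ne']
  have := (sin_div_tendsto.comp hx).const_mul Real.pi
  simpa using this
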